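/- arXiv:2204.06693 — 4 statements merged into one kernel-verified Lean document; each statement's English description precedes it below -/
import Mathlib

section
/- Let V : ℝ² → ℝ be a nonzero polynomial that is radially unbounded (V(x) → ∞ as ‖x‖ → ∞). Suppose the leading homogeneous part of V has nonzero even degree 2k. Then for all sufficiently large r > 0, V(e^{0.01}·(−r, 0)) > V((r, 0)). -/
open MvPolynomial

open Polynomial Filter in
theorem stmt10 (V : MvPolynomial (Fin 2) ℝ) (hV : V ≠ 0)
    (hrad : ∀ R : ℝ, ∃ r : ℝ, ∀ x : Fin 2 → ℝ, r ≤ ‖x‖ → R ≤ eval x V)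
    (k : ℕ) (hk : k ≠ 0) (hdeg : V.totalDegree = 2 * k) :
    ∃ r₀ : ℝ, 0 < r₀ ∧ ∀ r : ℝ, r₀ ≤ r →
      eval ![r, 0] V < eval (Real.exp 0.01 • ![-r, 0]) V := by
  set c : ℝ := Real.exp 0.01 with hcdef
  have hc1 : (1:ℝ) < c := by
    rw [hcdef, show (1:ℝ) = Real.exp 0 from Real.exp_zero.symm]
    exact Real.exp_lt_exp.2 (by norm_num)
  set p : Polynomial ℝ := MvPolynomial.aeval ![Polynomial.X, 0] V with hpdef
  have hp : ∀ t : ℝ, p.eval t = MvPolynomial.eval ![t, 0] V := by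
    intro t
    have h1 : (fun i => Polynomial.aeval t (![(Polynomial.X : Polynomial ℝ), 0] i)) = ![t, 0] := by
      funext i; fin_cases i <;> simp
    calc p.eval t = ((Polynomial.aeval t).comp (MvPolynomial.aeval ![Polynomial.X, 0])) V := by
          simp [hpdef, Polynomial.coe_aeval_eq_eval]
      _ = MvPolynomial.aeval ![t,0] V := by rw [MvPolynomial.comp_aeval, h1]
      _ = MvPolynomial.eval ![t,0] V := by
          rw [MvPolynomial.aeval_def, Algebra.algebraMap_self]; rfl
  have key : ∀ s : ℝ, |s| = 1 → Tendsto (fun r : ℝ => p.eval (s * r)) atTop atTop := by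
    intro s hs
    rw [tendsto_atTop_atTop]
    intro R
    obtain ⟨r, hr⟩ := hrad R
    refine ⟨max r 0, fun a ha => ?_⟩
    rw [hp]
    apply hr
    have h0 : ‖(![s*a, 0] : Fin 2 → ℝ) 0‖ ≤ ‖(![s*a, 0] : Fin 2 → ℝ)‖ := norm_le_pi_norm _ 0
    simp only [Matrix.cons_val_zero, Real.norm_eq_abs, abs_mul, hs, one_mul] at h0
    have ha0 : (0:ℝ) ≤ a := le_trans (le_max_right _ _) ha
    calc r ≤ max r 0 := le_max_left _ _
      _ ≤ a := ha
      _ = |a| := (abs_of_nonneg ha0).symm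
      _ ≤ ‖(![s*a, 0] : Fin 2 → ℝ)‖ := h0
  have htop := key 1 (by norm_num)
  have hbot := key (-1) (by norm_num)
  simp only [one_mul] at htop
  have hbot' : Tendsto (fun r : ℝ => Polynomial.eval r (p.comp (-Polynomial.X))) atTop atTop := by
    simpa [Polynomial.eval_comp] using hbot
  rw [Polynomial.tendsto_atTop_iff_leadingCoeff_nonneg] at htop hbot'
  obtain ⟨hdeg1, hlc⟩ := htop
  obtain ⟨-, hlc'⟩ := hbot'
  set a := p.leadingCoeff with hadef
  set d := p.natDegree with hddef
  have hpne : p ≠ 0 := by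
    intro h; rw [h] at hdeg1; simp at hdeg1
  have ha : 0 < a := lt_of_le_of_ne hlc (Ne.symm (Polynomial.leadingCoeff_ne_zero.2 hpne))
  have hd1 : 1 ≤ d := Polynomial.natDegree_pos_iff_degree_pos.2 hdeg1
  have hlcc : (p.comp (-Polynomial.X)).leadingCoeff = a * (-1)^d := by
    rw [Polynomial.leadingCoeff_comp (by simp)]
    simp
    rfl
  have hdeven : Even d := by
    by_contra hodd
    have hod : Odd d := Nat.not_even_iff_odd.1 hodd
    rw [hlcc, hod.neg_one_pow] at hlc'
    nlinarith
  have hcd : (1:ℝ) < c ^ d := one_lt_pow₀ hc1 (by omega)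
  set q := p.comp (Polynomial.C (-c) * Polynomial.X) - p with hq
  have hcX : (Polynomial.C (-c) * Polynomial.X : Polynomial ℝ).natDegree = 1 :=
    Polynomial.natDegree_C_mul_X _ (by nlinarith)
  have hcomp_nd : (p.comp (Polynomial.C (-c) * Polynomial.X)).natDegree = d := by
    rw [Polynomial.natDegree_comp, hcX, mul_one]
  have hcomp_lc : (p.comp (Polynomial.C (-c) * Polynomial.X)).leadingCoeff = a * c ^ d := by
    rw [Polynomial.leadingCoeff_comp (by rw [hcX]; norm_num)]
    have h2 : (Polynomial.C (-c) * Polynomial.X : Polynomial ℝ).leadingCoeff = -c := by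
      simp [Polynomial.leadingCoeff_C_mul_X]
    rw [h2, show (-c)^d = c^d from hdeven.neg_pow c]
  have hqcoeff : q.coeff d = a * (c^d - 1) := by
    have h3 := Polynomial.coeff_natDegree (p := p.comp (Polynomial.C (-c) * Polynomial.X))
    rw [hcomp_nd, hcomp_lc] at h3
    rw [hq, Polynomial.coeff_sub, h3, show p.coeff d = a from Polynomial.coeff_natDegree]
    ring
  have hqc : 0 < a * (c^d - 1) := by nlinarith
  have hqnd : q.natDegree = d := by
    refine le_antisymm (le_trans (Polynomial.natDegree_sub_le _ _) ?_)
      (Polynomial.le_natDegree_of_ne_zero (by rw [hqcoeff]; exact hqc.ne'))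
    rw [hcomp_nd, ← hddef, max_self]
  have hqne : q ≠ 0 := fun h => by
    rw [h, Polynomial.coeff_zero] at hqcoeff; nlinarith
  have hqlc : q.leadingCoeff = a * (c^d - 1) := by
    rw [Polynomial.leadingCoeff, hqnd, hqcoeff]
  have hqdeg : 0 < q.degree := by
    rw [Polynomial.degree_eq_natDegree hqne, hqnd]
    exact_mod_cast hd1
  have hqt : Tendsto (fun r => q.eval r) atTop atTop :=
    (Polynomial.tendsto_atTop_iff_leadingCoeff_nonneg q).2 ⟨hqdeg, by rw [hqlc]; exact hqc.le⟩
  obtain ⟨i, hi⟩ := tendsto_atTop_atTop.1 hqt 1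
  refine ⟨max i 1, lt_of_lt_of_le one_pos (le_max_right _ _), fun r hr => ?_⟩
  have h4 : (1:ℝ) ≤ q.eval r := hi r (le_trans (le_max_left _ _) hr)
  have h5 : q.eval r = p.eval (-c * r) - p.eval r := by
    simp [hq, Polynomial.eval_comp]
  have h6 : (c • ![-r, 0] : Fin 2 → ℝ) = ![-c * r, 0] := by
    funext j; fin_cases j <;> simp <;> ring
  rw [h6, ← hp, ← hp]
  linarith [h4, h5.symm.le]
end

section
/- The hybrid linear system of Example 1 admits no polynomial Lyapunov function: there is no polynomial V : ℝ² → ℝ with V(0) = 0, V(x) > 0 for x ≠ 0, and V strictly decreasing along all trajectories of the system. -/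
open MvPolynomial MeasureTheory

/-- Flow matrices of the hybrid linear system of Example 1. -/
noncomputable def Amat : Fin 4 → Matrix (Fin 2) (Fin 2) ℝ :=
  ![!![1/2, 1; -1, -3/2], !![-1, 1; -1, 1], !![1.01, 1; -1, -0.99], !![-1, 1; -1, 1]]

/-- Domains (the four closed quadrants of ℝ²). -/
def Hdom : Fin 4 → Set (Fin 2 → ℝ) :=
  ![{x | 0 ≤ x 0 ∧ 0 ≤ x 1}, {x | 0 ≤ x 0 ∧ x 1 ≤ 0},
    {x | x 0 ≤ 0 ∧ x 1 ≤ 0}, {x | x 0 ≤ 0 ∧ 0 ≤ x 1}]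

/-- The set-valued map of the hybrid system. -/
def Fmap (x : Fin 2 → ℝ) : Set (Fin 2 → ℝ) :=
  {v | ∃ q : Fin 4, x ∈ Hdom q ∧ v = (Amat q).mulVec x}

/-- A trajectory: an absolutely continuous solution of the differential
inclusion `ξ' ∈ Fmap ξ` a.e. on `[0, ∞)`, encoded via an integrable derivative. -/
def IsTrajectory (ξ : ℝ → Fin 2 → ℝ) : Prop :=
  ∃ v : ℝ → Fin 2 → ℝ,
    (∀ t : ℝ, 0 ≤ t → IntervalIntegrable v volume 0 t) ∧
    (∀ t : ℝ, 0 ≤ t → ξ t = ξ 0 + ∫ s in (0:ℝ)..t, v s) ∧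
    (∀ᵐ s ∂volume, 0 ≤ s → v s ∈ Fmap (ξ s))

noncomputable def ee : ℝ := Real.exp (1/100)
noncomputable def kp : ℝ := Real.exp (1/100) * Real.exp (-(1/2) : ℝ)

noncomputable def PP : ℕ → ℝ → Fin 2 → ℝ
  | 0 => fun u => ![1 - u, -u]
  | 1 => fun u => ![-(u-1) * Real.exp ((u-1)/100), (u-2) * Real.exp ((u-1)/100)]
  | 2 => fun u => ![ee * (u-3), ee * (u-2)]
  | _ => fun u => ![ee * ((u-3) * Real.exp (-(u-3)/2)), ee * ((4-u) * Real.exp (-(u-3)/2))]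

noncomputable def DD : ℕ → ℝ → Fin 2 → ℝ
  | 0 => fun _ => ![-1, -1]
  | 1 => fun u => ![(-1 - (u-1)/100) * Real.exp ((u-1)/100), (1 + (u-2)/100) * Real.exp ((u-1)/100)]
  | 2 => fun _ => ![ee, ee]
  | _ => fun u => ![ee * ((1 - (u-3)/2) * Real.exp (-(u-3)/2)), ee * ((-1 - (4-u)/2) * Real.exp (-(u-3)/2))]

def md : ℕ → Fin 4
  | 0 => 1
  | 1 => 2
  | 2 => 3
  | _ => 0

lemma hasDerivAt_vec2 {a b : ℝ → ℝ} {a' b' : ℝ} {t : ℝ}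
    (ha : HasDerivAt a a' t) (hb : HasDerivAt b b' t) :
    HasDerivAt (fun t => (![a t, b t] : Fin 2 → ℝ)) ![a', b'] t := by
  have h : HasDerivAt (fun t => a t • (![1, 0] : Fin 2 → ℝ) + b t • (![0, 1] : Fin 2 → ℝ))
      (a' • (![1, 0] : Fin 2 → ℝ) + b' • (![0, 1] : Fin 2 → ℝ)) t :=
    (ha.smul_const _).add (hb.smul_const _)
  convert h using 1
  · funext s i
    fin_cases i <;> simp [Pi.add_apply, Pi.smul_apply]
  · funext i
    fin_cases i <;> simp [Pi.add_apply, Pi.smul_apply]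

lemma ode1 (j : ℕ) (u : ℝ) : HasDerivAt (PP j) (DD j u) u := by
  match j with
  | 0 =>
    simpa [PP, DD] using hasDerivAt_vec2 (a := fun u : ℝ => 1 - u) (b := fun u : ℝ => -u)
      (by simpa using ((hasDerivAt_id u).const_sub 1)) (by simpa using (hasDerivAt_id u).fun_neg)
  | 1 =>
    have hE : HasDerivAt (fun u : ℝ => Real.exp ((u-1)/100)) (Real.exp ((u-1)/100) * (1/100)) u := by
      exact (Real.hasDerivAt_exp _).comp u (by simpa using ((hasDerivAt_id u).sub_const 1).div_const 100)
    have ha : HasDerivAt (fun u : ℝ => -(u-1) * Real.exp ((u-1)/100))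
        ((-1 - (u-1)/100) * Real.exp ((u-1)/100)) u := by
      have := (((hasDerivAt_id u).sub_const 1).fun_neg).fun_mul hE
      refine this.congr_deriv ?_; simp only [id_eq]; ring
    have hb : HasDerivAt (fun u : ℝ => (u-2) * Real.exp ((u-1)/100))
        ((1 + (u-2)/100) * Real.exp ((u-1)/100)) u := by
      have := ((hasDerivAt_id u).sub_const 2).fun_mul hE
      refine this.congr_deriv ?_; simp only [id_eq]; ring
    simpa [PP, DD] using hasDerivAt_vec2 ha hb
  | 2 =>
    have ha : HasDerivAt (fun u : ℝ => ee * (u-3)) ee u := by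
      simpa using (((hasDerivAt_id u).sub_const 3).const_mul ee)
    have hb : HasDerivAt (fun u : ℝ => ee * (u-2)) ee u := by
      simpa using (((hasDerivAt_id u).sub_const 2).const_mul ee)
    simpa [PP, DD] using hasDerivAt_vec2 ha hb
  | (n+3) =>
    have hE : HasDerivAt (fun u : ℝ => Real.exp (-(u-3)/2)) (Real.exp (-(u-3)/2) * (-1/2)) u := by
      exact (Real.hasDerivAt_exp _).comp u
        (by simpa using (((hasDerivAt_id u).sub_const 3).neg).div_const 2)
    have ha : HasDerivAt (fun u : ℝ => ee * ((u-3) * Real.exp (-(u-3)/2)))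
        (ee * ((1 - (u-3)/2) * Real.exp (-(u-3)/2))) u := by
      have := (((hasDerivAt_id u).sub_const 3).fun_mul hE).const_mul ee
      refine this.congr_deriv ?_; simp only [id_eq]; ring
    have hb : HasDerivAt (fun u : ℝ => ee * ((4-u) * Real.exp (-(u-3)/2)))
        (ee * ((-1 - (4-u)/2) * Real.exp (-(u-3)/2))) u := by
      have := (((hasDerivAt_id u).const_sub 4).fun_mul hE).const_mul ee
      refine this.congr_deriv ?_; simp only [id_eq]; ring
    simpa [PP, DD] using hasDerivAt_vec2 ha hb

lemma ode2 (j : ℕ) (u : ℝ) : (Amat (md j)).mulVec (PP j u) = DD j u := by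
  match j with
  | 0 => funext i; fin_cases i <;>
      simp [Amat, md, PP, DD, Matrix.mulVec, dotProduct, Fin.sum_univ_two] <;> ring
  | 1 => funext i; fin_cases i <;>
      (simp [Amat, md, PP, DD, Matrix.mulVec, dotProduct, Fin.sum_univ_two]; norm_num; ring)
  | 2 => funext i; fin_cases i <;>
      simp [Amat, md, PP, DD, Matrix.mulVec, dotProduct, Fin.sum_univ_two] <;> ring
  | (n+3) => funext i; fin_cases i <;>
      (simp [Amat, md, PP, DD, Matrix.mulVec, dotProduct, Fin.sum_univ_two]; ring)

noncomputable def G (m : ℕ) (t : ℝ) : Fin 2 → ℝ :=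
  kp ^ (m / 4) • PP (m % 4) (t - 4 * ((m / 4 : ℕ) : ℝ))

noncomputable def xi (t : ℝ) : Fin 2 → ℝ := G ⌊t⌋₊ t

noncomputable def vv (t : ℝ) : Fin 2 → ℝ := (Amat (md (⌊t⌋₊ % 4))).mulVec (xi t)

lemma ee_pos : 0 < ee := Real.exp_pos _
lemma kp_pos : 0 < kp := mul_pos (Real.exp_pos _) (Real.exp_pos _)

lemma dom_lemma (j : ℕ) (hj : j < 4) (u : ℝ) (h1 : (j : ℝ) ≤ u) (h2 : u ≤ j + 1) :
    PP j u ∈ Hdom (md j) := by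
  interval_cases j <;> push_cast at h1 h2 <;>
    simp only [PP, Hdom, md, Set.mem_setOf_eq, Matrix.cons_val_zero, Matrix.cons_val_one,
      Matrix.head_cons, Matrix.cons_val_two, Matrix.cons_val_three, Matrix.tail_cons,
      Matrix.cons_val_fin_one, Fin.isValue]
  · exact ⟨by linarith, by linarith⟩
  · have hE := Real.exp_pos ((u-1)/100)
    exact ⟨by nlinarith, by nlinarith⟩
  · have := ee_pos
    exact ⟨mul_nonpos_of_nonneg_of_nonpos this.le (by linarith),
      mul_nonneg this.le (by linarith)⟩
  · have := ee_pos
    have hE := Real.exp_pos (-(u-3)/2)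
    exact ⟨mul_nonneg this.le (mul_nonneg (by linarith) hE.le),
      mul_nonneg this.le (mul_nonneg (by linarith) hE.le)⟩

lemma dom_smul (q : Fin 4) (r : ℝ) (hr : 0 ≤ r) {x : Fin 2 → ℝ} (hx : x ∈ Hdom q) :
    r • x ∈ Hdom q := by
  have e0 : (r • x) 0 = r * x 0 := rfl
  have e1 : (r • x) 1 = r * x 1 := rfl
  fin_cases q <;>
    · obtain ⟨h1, h2⟩ := hx
      exact ⟨by rw [e0]; first | exact mul_nonneg hr h1
                               | exact mul_nonpos_of_nonneg_of_nonpos hr h1,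
             by rw [e1]; first | exact mul_nonneg hr h2
                               | exact mul_nonpos_of_nonneg_of_nonpos hr h2⟩

lemma match_lemma (m : ℕ) : G m ((m:ℝ)+1) = G (m+1) ((m:ℝ)+1) := by
  have hj : m % 4 = 0 ∨ m % 4 = 1 ∨ m % 4 = 2 ∨ m % 4 = 3 := by omega
  have hm : m = 4 * (m/4) + m % 4 := (Nat.div_add_mod m 4).symm
  rcases hj with h|h|h|h
  · have h1 : (m+1)/4 = m/4 := by omega
    have h2 : (m+1)%4 = 1 := by omega
    have hmr : (m:ℝ) = 4*((m/4 : ℕ):ℝ) := by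
      conv_lhs => rw [hm, h]
      push_cast; ring
    rw [G, G, h1, h2, h]
    have e : (m:ℝ) + 1 - 4*((m/4 : ℕ):ℝ) = 1 := by rw [hmr]; ring
    rw [e]
    congr 1
    funext i; fin_cases i <;> norm_num [PP]
  · have h1 : (m+1)/4 = m/4 := by omega
    have h2 : (m+1)%4 = 2 := by omega
    have hmr : (m:ℝ) = 4*((m/4 : ℕ):ℝ) + 1 := by
      conv_lhs => rw [hm, h]
      push_cast; ring
    rw [G, G, h1, h2, h]
    have e : (m:ℝ) + 1 - 4*((m/4 : ℕ):ℝ) = 2 := by rw [hmr]; ring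
    rw [e]
    congr 1
    funext i; fin_cases i <;> norm_num [PP, ee]
  · have h1 : (m+1)/4 = m/4 := by omega
    have h2 : (m+1)%4 = 3 := by omega
    have hmr : (m:ℝ) = 4*((m/4 : ℕ):ℝ) + 2 := by
      conv_lhs => rw [hm, h]
      push_cast; ring
    rw [G, G, h1, h2, h]
    have e : (m:ℝ) + 1 - 4*((m/4 : ℕ):ℝ) = 3 := by rw [hmr]; ring
    rw [e]
    congr 1
    funext i; fin_cases i <;> norm_num [PP, ee]
  · have h1 : (m+1)/4 = m/4 + 1 := by omega
    have h2 : (m+1)%4 = 0 := by omega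
    have hmr : (m:ℝ) = 4*((m/4 : ℕ):ℝ) + 3 := by
      conv_lhs => rw [hm, h]
      push_cast; ring
    rw [G, G, h1, h2, h]
    have e : (m:ℝ) + 1 - 4*((m/4 : ℕ):ℝ) = 4 := by rw [hmr]; ring
    have e' : (m:ℝ) + 1 - 4*(((m/4 + 1) : ℕ):ℝ) = 0 := by push_cast; rw [hmr]; ring
    rw [e, e']
    funext i; fin_cases i <;>
      simp [PP, Pi.smul_apply, pow_succ, kp, ee] <;> norm_num <;> ring

lemma floor_eq_on (m : ℕ) {t : ℝ} (h1 : (m:ℝ) ≤ t) (h2 : t < m+1) : ⌊t⌋₊ = m :=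
  (Nat.floor_eq_iff (le_trans (Nat.cast_nonneg m) h1)).mpr ⟨h1, by exact_mod_cast h2⟩

lemma xi_eq_G (m : ℕ) {t : ℝ} (h1 : (m:ℝ) ≤ t) (h2 : t ≤ m+1) : xi t = G m t := by
  rcases lt_or_eq_of_le h2 with h | h
  · rw [xi, floor_eq_on m h1 h]
  · have hfl : ⌊(m:ℝ) + 1⌋₊ = m + 1 := by
      have : ((m:ℝ) + 1) = ((m+1 : ℕ) : ℝ) := by push_cast; ring
      rw [this, Nat.floor_natCast]
    rw [h, xi, hfl]
    exact (match_lemma m).symm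

lemma G_hasDeriv (m : ℕ) (s : ℝ) :
    HasDerivAt (G m) (kp ^ (m / 4) • DD (m % 4) (s - 4 * ((m / 4 : ℕ) : ℝ))) s := by
  have h := (ode1 (m % 4) (s - 4 * ((m / 4 : ℕ) : ℝ)))
  have hshift : HasDerivAt (fun t : ℝ => t - 4 * ((m / 4 : ℕ) : ℝ)) 1 s :=
    (hasDerivAt_id s).sub_const _
  have := (h.scomp s hshift)
  simp only [one_smul] at this
  exact this.fun_const_smul (kp ^ (m / 4))

lemma G_deriv_eq (m : ℕ) (s : ℝ) :
    (Amat (md (m % 4))).mulVec (G m s) = kp ^ (m / 4) • DD (m % 4) (s - 4 * ((m / 4 : ℕ) : ℝ)) := by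
  rw [G, Matrix.mulVec_smul, ode2]

lemma G_cont (m : ℕ) : Continuous (G m) :=
  continuous_iff_continuousAt.mpr fun s => (G_hasDeriv m s).continuousAt

lemma f'_cont (m : ℕ) : Continuous (fun s => (Amat (md (m % 4))).mulVec (G m s)) :=
  continuous_const.matrix_mulVec (G_cont m)

lemma pieceA (m : ℕ) {t : ℝ} (h1 : (m:ℝ) ≤ t) (h2 : t ≤ m+1) :
    IntervalIntegrable vv volume m t ∧ (∫ s in (m:ℝ)..t, vv s) = xi t - xi m := by
  have hf' : ∀ x, (Amat (md (m % 4))).mulVec (G m x) = kp ^ (m / 4) • DD (m % 4) (x - 4 * ((m / 4 : ℕ) : ℝ)) := G_deriv_eq m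
  have hieq : ∀ᵐ (x : ℝ) ∂volume, x ∈ Set.uIoc (m:ℝ) t → vv x = (Amat (md (m % 4))).mulVec (G m x) := by
    have hne : ∀ᵐ (x : ℝ) ∂volume, x ≠ (m:ℝ)+1 := by
      rw [MeasureTheory.ae_iff]
      simp only [ne_eq, not_not, Set.setOf_eq_eq_singleton]
      exact MeasureTheory.measure_singleton _
    filter_upwards [hne] with x hx hmem
    rw [Set.uIoc_of_le h1] at hmem
    have hx1 : (m:ℝ) ≤ x := le_of_lt hmem.1
    have hx2 : x < m+1 := lt_of_le_of_ne (le_trans hmem.2 h2) hx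
    rw [vv, floor_eq_on m hx1 hx2, xi_eq_G m hx1 hx2.le]
  have hint : IntervalIntegrable (fun s => (Amat (md (m % 4))).mulVec (G m s)) volume m t :=
    (f'_cont m).intervalIntegrable _ _
  have hDeriv : ∀ x ∈ Set.uIcc (m:ℝ) t,
      HasDerivAt (G m) ((Amat (md (m % 4))).mulVec (G m x)) x := by
    intro x _
    rw [hf' x]
    exact G_hasDeriv m x
  have hFTC : (∫ s in (m:ℝ)..t, (Amat (md (m % 4))).mulVec (G m s)) = G m t - G m m :=
    intervalIntegral.integral_eq_sub_of_hasDerivAt hDeriv hint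
  refine ⟨hint.congr_ae ?_, ?_⟩
  · exact ((MeasureTheory.ae_restrict_iff' measurableSet_uIoc).mpr
      (hieq.mono fun x hx hmem => (hx hmem).symm))
  · rw [intervalIntegral.integral_congr_ae hieq, hFTC,
      xi_eq_G m h1 h2, xi_eq_G m (le_refl (m:ℝ)) (by linarith)]

lemma chainB (m : ℕ) :
    IntervalIntegrable vv volume 0 m ∧ (∫ s in (0:ℝ)..m, vv s) = xi m - xi 0 := by
  induction m with
  | zero =>
    constructor
    · simpa using (pieceA 0 (le_refl (0:ℝ)) (by norm_num)).1
    · simp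
  | succ n ih =>
    have hb1 : ((n:ℝ)) ≤ (n:ℝ)+1 := by linarith
    have hA := pieceA n hb1 (le_refl _)
    have hcast : (((n+1 : ℕ)):ℝ) = (n:ℝ)+1 := by push_cast; ring
    constructor
    · rw [hcast]; exact ih.1.trans hA.1
    · rw [hcast, ← intervalIntegral.integral_add_adjacent_intervals ih.1 hA.1, ih.2, hA.2]
      abel

lemma xi_traj : IsTrajectory xi := by
  refine ⟨vv, ?_, ?_, ?_⟩
  · intro t ht
    have h1 := Nat.floor_le ht
    have h2 := (Nat.lt_floor_add_one t).le
    exact (chainB ⌊t⌋₊).1.trans (pieceA ⌊t⌋₊ h1 h2).1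
  · intro t ht
    have h1 := Nat.floor_le ht
    have h2 := (Nat.lt_floor_add_one t).le
    have hadd := intervalIntegral.integral_add_adjacent_intervals (chainB ⌊t⌋₊).1
      (pieceA ⌊t⌋₊ h1 h2).1
    rw [← hadd, (chainB ⌊t⌋₊).2, (pieceA ⌊t⌋₊ h1 h2).2]
    abel
  · refine Filter.Eventually.of_forall ?_
    intro s hs
    have h1 := Nat.floor_le hs
    have h2 := Nat.lt_floor_add_one s
    set m := ⌊s⌋₊ with hm
    refine ⟨md (m % 4), ?_, rfl⟩
    have hxg : xi s = G m s := xi_eq_G m h1 h2.le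
    rw [hxg, G]
    have hmod : m % 4 < 4 := Nat.mod_lt _ (by norm_num)
    have hcast : (m:ℝ) = 4*((m/4 : ℕ):ℝ) + ((m % 4 : ℕ):ℝ) := by
      conv_lhs => rw [(Nat.div_add_mod m 4).symm]
      push_cast; ring
    refine dom_smul _ _ (le_of_lt (pow_pos kp_pos _)) (dom_lemma (m % 4) hmod _ ?_ ?_)
    · rw [hcast] at h1; linarith
    · rw [hcast] at h2; linarith

lemma traj_smul {ξ : ℝ → Fin 2 → ℝ} (h : IsTrajectory ξ) {r : ℝ} (hr : 0 ≤ r) :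
    IsTrajectory (fun t => r • ξ t) := by
  obtain ⟨v, hint, heq, hmem⟩ := h
  refine ⟨fun t => r • v t, fun t ht => (hint t ht).smul r, fun t ht => ?_, ?_⟩
  · show r • ξ t = r • ξ 0 + ∫ s in (0:ℝ)..t, r • v s
    rw [intervalIntegral.integral_smul, ← smul_add, ← heq t ht]
  · filter_upwards [hmem] with s hs hs0
    obtain ⟨q, hq, hv⟩ := hs hs0
    exact ⟨q, dom_smul q r hr hq, by rw [hv, Matrix.mulVec_smul]⟩

lemma xi_zero : xi 0 = ![1, 0] := by
  rw [xi, Nat.floor_zero, G]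
  funext i; fin_cases i <;> norm_num [PP]

lemma xi_two : xi 2 = ![-ee, 0] := by
  have h2 : ⌊(2:ℝ)⌋₊ = 2 := by
    have : ((2:ℕ):ℝ) = (2:ℝ) := by norm_num
    rw [← this, Nat.floor_natCast]
  rw [xi, h2, G]
  funext i; fin_cases i <;> norm_num [PP]

open Polynomial Filter in
lemma onevar (q : Polynomial ℝ) (h0 : q.eval 0 = 0) (hpos : ∀ s : ℝ, s ≠ 0 → 0 < q.eval s)
    (c : ℝ) (hc : 1 < c) (hdec : ∀ r : ℝ, 0 < r → q.eval (-(c*r)) < q.eval r) : False := by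
  have hq0 : q ≠ 0 := fun h => by simpa [h] using hpos 1 one_ne_zero
  have hn1 : 1 ≤ q.natDegree := by
    by_contra h
    push_neg at h
    interval_cases hnd : q.natDegree
    · obtain ⟨a, rfl⟩ := Polynomial.natDegree_eq_zero.mp hnd
      simp only [Polynomial.eval_C] at h0 hpos
      exact absurd (hpos 1 one_ne_zero) (by simp [h0])
  have hdeg : 0 < q.degree := Polynomial.natDegree_pos_iff_degree_pos.mp hn1
  -- positive leading coefficient
  have hlc : 0 < q.leadingCoeff := by
    rcases le_or_gt q.leadingCoeff 0 with h | h
    · exfalso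
      have := Polynomial.tendsto_atBot_of_leadingCoeff_nonpos q hdeg h
      have hev : ∀ᶠ x : ℝ in atTop, q.eval x < 0 := this.eventually (eventually_lt_atBot 0)
      obtain ⟨x, hx1, hx2⟩ := (hev.and (eventually_gt_atTop 0)).exists
      exact absurd (hpos x hx2.ne') (by linarith)
    · exact h
  -- even degree
  have heven : Even q.natDegree := by
    rcases Nat.even_or_odd q.natDegree with h | h
    · exact h
    exfalso
    set q2 := q.comp (-Polynomial.X) with hq2
    have hdq2 : q2.natDegree = q.natDegree := by
      rw [hq2, Polynomial.natDegree_comp]; simp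
    have hlq2 : q2.leadingCoeff = -q.leadingCoeff := by
      rw [hq2, Polynomial.leadingCoeff_comp (by simp)]
      simp [h.neg_one_pow]
    have hdeg2 : 0 < q2.degree := Polynomial.natDegree_pos_iff_degree_pos.mp (by omega)
    have := Polynomial.tendsto_atBot_of_leadingCoeff_nonpos q2 hdeg2 (by linarith)
    have hev : ∀ᶠ x : ℝ in atTop, q2.eval x < 0 := this.eventually (eventually_lt_atBot 0)
    obtain ⟨x, hx1, hx2⟩ := (hev.and (eventually_gt_atTop 0)).exists
    have he : q2.eval x = q.eval (-x) := by simp [hq2]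
    have hp2 := hpos (-x) (neg_ne_zero.mpr hx2.ne')
    rw [he] at hx1
    linarith
  -- the contradiction polynomial
  set p := q - q.comp (Polynomial.C (-c) * Polynomial.X) with hp
  have hcne : (-c) ≠ 0 := by linarith
  have hdc : (q.comp (Polynomial.C (-c) * Polynomial.X)).natDegree = q.natDegree := by
    rw [Polynomial.natDegree_comp, Polynomial.natDegree_C_mul_X _ hcne, mul_one]
  have hlcc : (q.comp (Polynomial.C (-c) * Polynomial.X)).leadingCoeff = q.leadingCoeff * c ^ q.natDegree := by
    rw [Polynomial.leadingCoeff_comp (by rw [Polynomial.natDegree_C_mul_X _ hcne]; norm_num)]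
    congr 1
    rw [Polynomial.leadingCoeff_C_mul_X]  -- leadingCoeff (C a * X) = a ?
    exact heven.neg_pow c
  have hcoeffn : p.coeff q.natDegree = q.leadingCoeff * (1 - c ^ q.natDegree) := by
    rw [hp, Polynomial.coeff_sub]
    have e1 : q.coeff q.natDegree = q.leadingCoeff := rfl
    have e2 : (q.comp (Polynomial.C (-c) * Polynomial.X)).coeff q.natDegree = q.leadingCoeff * c ^ q.natDegree := by
      rw [← hdc]; rw [← Polynomial.leadingCoeff]; rw [hdc, hlcc]
    rw [e1, e2]; ring
  have hcn : 1 < c ^ q.natDegree := one_lt_pow₀ hc (by omega)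
  have hcoefneg : p.coeff q.natDegree < 0 := by
    rw [hcoeffn]
    have : 1 - c ^ q.natDegree < 0 := by linarith
    nlinarith
  have hdle : p.natDegree ≤ q.natDegree := by
    have h' := Polynomial.natDegree_sub_le q (q.comp (Polynomial.C (-c) * Polynomial.X))
    rw [hdc, max_self] at h'
    exact h'
  have hdeq : p.natDegree = q.natDegree :=
    le_antisymm hdle (Polynomial.le_natDegree_of_ne_zero (by rw [hcoeffn]; nlinarith))
  have hlp : p.leadingCoeff < 0 := by
    rw [Polynomial.leadingCoeff, hdeq]; exact hcoefneg
  have hdegp : 0 < p.degree := Polynomial.natDegree_pos_iff_degree_pos.mp (by omega)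
  have := Polynomial.tendsto_atBot_of_leadingCoeff_nonpos p hdegp hlp.le
  have hev : ∀ᶠ x : ℝ in atTop, p.eval x < 0 := this.eventually (eventually_lt_atBot 0)
  obtain ⟨x, hx1, hx2⟩ := (hev.and (eventually_gt_atTop 0)).exists
  have : p.eval x = q.eval x - q.eval (-(c*x)) := by
    simp [hp, Polynomial.eval_comp]
  rw [this] at hx1
  have := hdec x hx2
  linarith

lemma one_lt_ee : (1:ℝ) < ee := by
  have := Real.add_one_lt_exp (by norm_num : (1/100:ℝ) ≠ 0)
  rw [ee]; linarith

theorem stmt11 :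
    ¬ ∃ V : MvPolynomial (Fin 2) ℝ,
        eval (0 : Fin 2 → ℝ) V = 0 ∧
        (∀ x : Fin 2 → ℝ, x ≠ 0 → 0 < eval x V) ∧
        ∀ ξ : ℝ → Fin 2 → ℝ, IsTrajectory ξ → ξ 0 ≠ 0 →
          StrictAntiOn (fun t => eval (ξ t) V) (Set.Ici 0) := by
  rintro ⟨V, h0, hpos, hdec⟩
  set q : Polynomial ℝ := MvPolynomial.eval₂ Polynomial.C ![Polynomial.X, 0] V with hq
  have hqeval : ∀ s : ℝ, q.eval s = MvPolynomial.eval ![s, 0] V := by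
    intro s
    have h := MvPolynomial.eval₂_comp_left (Polynomial.evalRingHom s)
      Polynomial.C ![Polynomial.X, 0] V
    have h1 : (Polynomial.evalRingHom s).comp Polynomial.C = RingHom.id ℝ :=
      RingHom.ext (by simp)
    have h2 : (⇑(Polynomial.evalRingHom s)) ∘ ![Polynomial.X, (0 : Polynomial ℝ)] = ![s, 0] := by
      funext i; fin_cases i <;> simp
    rw [h1, h2] at h
    rw [hq]
    show (Polynomial.evalRingHom s) (MvPolynomial.eval₂ Polynomial.C ![Polynomial.X, 0] V) = _
    rw [h]
    rfl
  have hzerovec : (![0, 0] : Fin 2 → ℝ) = 0 := by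
    funext i; fin_cases i <;> simp
  refine onevar q ?_ ?_ ee one_lt_ee ?_
  · rw [hqeval 0, hzerovec, h0]
  · intro s hs
    rw [hqeval s]
    refine hpos _ (fun h => hs ?_)
    have := congrFun h 0
    simpa using this
  · intro r hr
    have htr := traj_smul xi_traj hr.le
    have hne : (fun t => r • xi t) 0 ≠ 0 := by
      intro h
      have h' : (r • xi 0) 0 = (0:ℝ) := by simpa using congrFun h 0
      rw [xi_zero] at h'
      simp at h'
      exact hr.ne' h'
    have hsan := hdec _ htr hne
    have h02 := hsan (Set.self_mem_Ici) (by norm_num : (2:ℝ) ∈ Set.Ici 0) (by norm_num)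
    simp only at h02
    have e0 : r • xi 0 = ![r, 0] := by
      rw [xi_zero]; funext i; fin_cases i <;> simp
    have e2 : r • xi 2 = ![-(ee*r), 0] := by
      rw [xi_two]; funext i; fin_cases i <;> simp [mul_comm] <;> ring
    rw [e0, e2] at h02
    rw [hqeval, hqeval]
    exact h02
end

section
/- Fix λ ∈ ℝ, λ ≠ 0, and real numbers f̄, ḡ, f̃, g̃. The following two statements are equivalent: (i) for all nonzero λ, [f̄λ ≥ ḡλ ⇒ (f̄λ > 0 ∧ −f̄λ + f̃|λ| < 0)] and [ḡλ ≥ f̄λ ⇒ (ḡλ > 0 ∧ −ḡλ + g̃|λ| < 0)]; (ii) f̄·ḡ < 0, |f̄| > f̃, and |ḡ| > g̃. -/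
theorem stmt12 (f g ft gt : ℝ) :
    (∀ l : ℝ, l ≠ 0 →
        ((g * l ≤ f * l → (0 < f * l ∧ -(f * l) + ft * |l| < 0)) ∧
         (f * l ≤ g * l → (0 < g * l ∧ -(g * l) + gt * |l| < 0)))) ↔
      (f * g < 0 ∧ ft < |f| ∧ gt < |g|) := by
  constructor
  · intro h
    have h1 := h 1 one_ne_zero
    have h2 := h (-1) (by norm_num)
    simp only [mul_one, mul_neg_one, abs_one, abs_neg, mul_one] at h1 h2
    rcases le_total g f with hgf | hfg
    · obtain ⟨hf1, hf2⟩ := h1.1 hgf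
      obtain ⟨hg1, hg2⟩ := h2.2 (by linarith)
      refine ⟨by nlinarith, ?_, ?_⟩
      · calc ft < f := by linarith
          _ ≤ |f| := le_abs_self f
      · calc gt < -g := by linarith
          _ ≤ |g| := neg_le_abs g
    · obtain ⟨hg1, hg2⟩ := h1.2 hfg
      obtain ⟨hf1, hf2⟩ := h2.1 (by linarith)
      refine ⟨by nlinarith, ?_, ?_⟩
      · calc ft < -f := by linarith
          _ ≤ |f| := neg_le_abs f
      · calc gt < g := by linarith
          _ ≤ |g| := le_abs_self g
  · rintro ⟨hfg, hft, hgt⟩ l hl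
    rcases hl.lt_or_gt with hlneg | hlpos
    · rw [abs_of_neg hlneg]
      rcases mul_neg_iff.mp hfg with ⟨hf, hg⟩ | ⟨hf, hg⟩
      · rw [abs_of_pos hf] at hft
        rw [abs_of_neg hg] at hgt
        constructor
        · intro hle; exfalso; nlinarith
        · intro _; constructor <;> nlinarith
      · rw [abs_of_neg hf] at hft
        rw [abs_of_pos hg] at hgt
        constructor
        · intro _; constructor <;> nlinarith
        · intro hle; exfalso; nlinarith
    · rw [abs_of_pos hlpos]
      rcases mul_neg_iff.mp hfg with ⟨hf, hg⟩ | ⟨hf, hg⟩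
      · rw [abs_of_pos hf] at hft
        rw [abs_of_neg hg] at hgt
        constructor
        · intro _; constructor <;> nlinarith
        · intro hle; exfalso; nlinarith
      · rw [abs_of_neg hf] at hft
        rw [abs_of_pos hg] at hgt
        constructor
        · intro hle; exfalso; nlinarith
        · intro _; constructor <;> nlinarith
end

section
/- Let V(x) = max_{i∈[m]} c_i^⊤ x and suppose conditions (C1) and (C2) hold: (C1) for all nonzero x there is i with c_i^⊤ x > 0; (C2) for all nonzero x, all v ∈ F(x), and all i with c_i^⊤ x = V(x), one has c_i^⊤ v < 0. Then for every absolutely continuous trajectory ξ with ξ'(t) ∈ F(ξ(t)) a.e. and ξ(t) ≠ 0 on an interval [a,b] with a < b, the function t ↦ V(ξ(t)) is strictly decreasing on [a,b]. -/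
open MeasureTheory Set Filter Metric

section helpers

lemma continuous_finset_sup' {ι : Type*} {X : Type*} [TopologicalSpace X] (s : Finset ι)
    (hs : s.Nonempty) {g : ι → X → ℝ} (h : ∀ i, Continuous (g i)) :
    Continuous (fun x => s.sup' hs (fun i => g i x)) := by
  induction hs using Finset.Nonempty.cons_induction with
  | singleton a => simpa using h a
  | cons a u ha hu ih =>
      simp only [Finset.sup'_cons hu]
      exact (h a).max ih

lemma intervalIntegrable_finset_sup' {ι : Type*} (s : Finset ι) (hs : s.Nonempty) {g : ι → ℝ → ℝ}
    {a b : ℝ} (h : ∀ i, IntervalIntegrable (g i) volume a b) :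
    IntervalIntegrable (fun x => s.sup' hs (fun i => g i x)) volume a b := by
  induction hs using Finset.Nonempty.cons_induction with
  | singleton a => simpa using h a
  | cons a u ha hu ih =>
      simp only [Finset.sup'_cons hu]
      constructor
      · exact ((h a).1.sup ih.1 : )
      · exact ((h a).2.sup ih.2 : )

lemma local_le {h : ℝ → ℝ} {s t : ℝ} (hst : s ≤ t) (hc : ContinuousOn h (Set.Icc s t))
    (H : ∀ u ∈ Set.Ico s t, ∀ᶠ x in nhdsWithin u (Set.Ioi u), x ≤ t → h x ≤ h u) :
    h t ≤ h s := by
  set S : Set ℝ := Set.Icc s t ∩ h ⁻¹' (Set.Iic (h s)) with hS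
  have hSclosed : IsClosed S := hc.preimage_isClosed_of_isClosed isClosed_Icc isClosed_Iic
  have hSne : S.Nonempty := ⟨s, ⟨le_refl s, hst⟩, Set.mem_preimage.2 Set.self_mem_Iic⟩
  have hSbdd : BddAbove S := ⟨t, fun x hx => hx.1.2⟩
  have hmem : sSup S ∈ S := hSclosed.csSup_mem hSne hSbdd
  rcases eq_or_lt_of_le hmem.1.2 with heq | hlt
  · rw [← heq]; exact hmem.2
  · exfalso
    have hu : sSup S ∈ Set.Ico s t := ⟨hmem.1.1, hlt⟩
    have h1 := H _ hu
    have h2 : ∀ᶠ x in nhdsWithin (sSup S) (Set.Ioi (sSup S)), x < t :=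
      eventually_nhdsWithin_of_eventually_nhds (eventually_lt_nhds hlt)
    have h3 : ∀ᶠ x in nhdsWithin (sSup S) (Set.Ioi (sSup S)), sSup S < x :=
      eventually_mem_nhdsWithin
    obtain ⟨x, hx1, hx2, hx3⟩ := (h1.and (h2.and h3)).exists
    have hxS : x ∈ S := ⟨⟨hmem.1.1.trans hx3.le, hx2.le⟩,
      Set.mem_preimage.2 ((hx1 hx2.le).trans hmem.2)⟩
    exact absurd (le_csSup hSbdd hxS) (not_le.2 hx3)

lemma ae_onesided (w : ℝ → ℝ) (hw : Integrable w (volume : Measure ℝ)) :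
    ∀ᵐ u ∂(volume : Measure ℝ), ∀ ε > (0:ℝ), ∀ᶠ x in nhdsWithin u (Set.Ioi u),
      |(∫ σ in u..x, w σ) - (x - u) * w u| ≤ ε * (x - u) := by
  filter_upwards [IsUnifLocDoublingMeasure.ae_tendsto_average_norm_sub (μ := volume)
    hw.locallyIntegrable 1] with u hu ε hε
  have hδ : Filter.Tendsto (fun x : ℝ => (x - u) / 2) (nhdsWithin u (Set.Ioi u))
      (nhdsWithin 0 (Set.Ioi 0)) := by
    apply tendsto_nhdsWithin_of_tendsto_nhds_of_eventually_within
    · have : Filter.Tendsto (fun x : ℝ => (x - u) / 2) (nhds u) (nhds ((u - u)/2)) :=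
        (tendsto_id.sub tendsto_const_nhds).div_const 2
      simpa using this.mono_left nhdsWithin_le_nhds
    · filter_upwards [eventually_mem_nhdsWithin] with x (hx : x ∈ Set.Ioi u)
      exact div_pos (sub_pos.2 hx) (two_pos : (0:ℝ) < 2)
  have hmem : ∀ᶠ x in nhdsWithin u (Set.Ioi u),
      u ∈ closedBall ((u + x) / 2) (1 * ((x - u) / 2)) := by
    filter_upwards [eventually_mem_nhdsWithin] with x (hx : x ∈ Set.Ioi u)
    rw [mem_closedBall, one_mul, Real.dist_eq]
    rw [abs_le]
    constructor <;> nlinarith [le_of_lt (Set.mem_Ioi.1 hx)]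
  have key := hu (fun x : ℝ => (u + x) / 2) (fun x : ℝ => (x - u) / 2) hδ hmem
  have hev : ∀ᶠ x in nhdsWithin u (Set.Ioi u),
      ⨍ y in closedBall ((u + x) / 2) ((x - u) / 2), ‖w y - w u‖ ≤ ε := by
    filter_upwards [key.eventually_le_const hε] with x hx using hx
  filter_upwards [hev, eventually_mem_nhdsWithin] with x hx (hxu : x ∈ Set.Ioi u)
  have hux : u < x := hxu
  have hvol : (volume (closedBall ((u + x) / 2) ((x - u) / 2))).toReal = x - u := by
    rw [Real.volume_closedBall, ENNReal.toReal_ofReal (by linarith)]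
    ring
  have hInt : ∫ y in closedBall ((u + x) / 2) ((x - u) / 2), ‖w y - w u‖
      = (x - u) * ⨍ y in closedBall ((u + x) / 2) ((x - u) / 2), ‖w y - w u‖ := by
    rw [setAverage_eq, smul_eq_mul, ← mul_assoc, measureReal_def, hvol, mul_inv_cancel₀ (by linarith), one_mul]
  have hsub : Set.Ioc u x ⊆ closedBall ((u + x) / 2) ((x - u) / 2) := by
    intro y hy
    rw [mem_closedBall, Real.dist_eq, abs_le]
    constructor <;> [nlinarith [hy.1.le, hy.2]; nlinarith [hy.1.le, hy.2]]
  have h1 : (∫ σ in u..x, w σ) - (x - u) * w u = ∫ σ in Set.Ioc u x, (w σ - w u) := by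
    rw [intervalIntegral.integral_of_le hux.le]
    rw [integral_sub (hw.integrableOn) (integrableOn_const measure_Ioc_lt_top.ne)]
    congr 1
    rw [setIntegral_const, measureReal_def, Real.volume_Ioc, smul_eq_mul, ENNReal.toReal_ofReal (by linarith)]
  rw [h1]
  calc |∫ σ in Set.Ioc u x, (w σ - w u)| ≤ ∫ σ in Set.Ioc u x, |w σ - w u| := by
        simpa using MeasureTheory.norm_integral_le_integral_norm
          (μ := volume.restrict (Set.Ioc u x)) (fun σ => w σ - w u)
    _ ≤ ∫ y in closedBall ((u + x) / 2) ((x - u) / 2), |w y - w u| := by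
        apply setIntegral_mono_set
        · exact (hw.integrableOn.sub (integrableOn_const measure_closedBall_lt_top.ne)).abs
        · filter_upwards with y using abs_nonneg _
        · exact HasSubset.Subset.eventuallyLE hsub
    _ = (x - u) * ⨍ y in closedBall ((u + x) / 2) ((x - u) / 2), ‖w y - w u‖ := hInt
    _ ≤ ε * (x - u) := by
        rw [mul_comm]
        exact mul_le_mul_of_nonneg_right hx (by linarith)

end helpers

noncomputable def polyV {m d : ℕ} (hm : 0 < m) (c : Fin m → Fin d → ℝ)
    (x : Fin d → ℝ) : ℝ :=
  Finset.univ.sup' ⟨⟨0, hm⟩, Finset.mem_univ _⟩ (fun i => ∑ k, c i k * x k)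

set_option maxHeartbeats 2000000 in
theorem stmt16 (d m : ℕ) (hd : 0 < d) (hm : 0 < m) (c : Fin m → Fin d → ℝ)
    (F : (Fin d → ℝ) → Set (Fin d → ℝ))
    (hFne : ∀ x, (F x).Nonempty) (hFcpt : ∀ x, IsCompact (F x))
    (hC1 : ∀ x : Fin d → ℝ, x ≠ 0 → ∃ i : Fin m, 0 < ∑ k, c i k * x k)
    (hC2 : ∀ x : Fin d → ℝ, x ≠ 0 → ∀ v ∈ F x, ∀ i : Fin m,
      (∑ k, c i k * x k) = polyV hm c x → ∑ k, c i k * v k < 0)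
    (ξ : ℝ → Fin d → ℝ) (a b : ℝ) (hab : a < b)
    -- absolute continuity of `ξ` on `[a, b]`, with a.e. derivative in `F (ξ t)`:
    (hξ : ∃ v : ℝ → Fin d → ℝ,
      IntervalIntegrable v volume a b ∧
      (∀ t ∈ Set.Icc a b, ξ t = ξ a + ∫ s in a..t, v s) ∧
      (∀ᵐ s ∂volume, s ∈ Set.Icc a b → v s ∈ F (ξ s)))
    (hne : ∀ t ∈ Set.Icc a b, ξ t ≠ 0) :
    StrictAntiOn (fun t => polyV hm c (ξ t)) (Set.Icc a b) := by
  classical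
  obtain ⟨v, hvI, hvEq, hvF⟩ := hξ
  have hne' : (Finset.univ : Finset (Fin m)).Nonempty := ⟨⟨0, hm⟩, Finset.mem_univ _⟩
  -- linear functionals
  set L : Fin m → (Fin d → ℝ) →L[ℝ] ℝ := fun i =>
    LinearMap.toContinuousLinearMap
      (∑ k, c i k • (LinearMap.proj k : (Fin d → ℝ) →ₗ[ℝ] ℝ)) with hLdef
  have hL : ∀ i x, L i x = ∑ k, c i k * x k := by
    intro i x
    simp [hLdef, LinearMap.sum_apply, LinearMap.smul_apply, LinearMap.proj_apply, smul_eq_mul]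
  set G : Fin m → ℝ → ℝ := fun i τ => ∑ k, c i k * ξ τ k with hGdef
  have hfG : ∀ τ, polyV hm c (ξ τ) = Finset.univ.sup' hne' (fun i => G i τ) := fun τ => rfl
  have hGle : ∀ i τ, G i τ ≤ polyV hm c (ξ τ) := by
    intro i τ
    rw [hfG]
    exact Finset.le_sup' (fun j => G j τ) (Finset.mem_univ i)
  set wi : Fin m → ℝ → ℝ := fun i τ => L i (v τ) with hwidef
  have hwiI : ∀ i, IntervalIntegrable (wi i) volume a b := by
    intro i
    exact ⟨(L i).integrable_comp hvI.1, (L i).integrable_comp hvI.2⟩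
  have hsubI : ∀ p ∈ Set.Icc a b, ∀ q ∈ Set.Icc a b, Set.uIcc p q ⊆ Set.uIcc a b := by
    intro p hp q hq
    have h1 : p ∈ Set.uIcc a b := by rw [Set.uIcc_of_le hab.le]; exact hp
    have h2 : q ∈ Set.uIcc a b := by rw [Set.uIcc_of_le hab.le]; exact hq
    exact Set.uIcc_subset_uIcc h1 h2
  -- the identity G i t = G i a + ∫ a..t wi i
  have hGt : ∀ t ∈ Set.Icc a b, ∀ i, G i t = G i a + ∫ σ in a..t, wi i σ := by
    intro t ht i
    have h2 : IntervalIntegrable v volume a t :=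
      hvI.mono_set (hsubI a ⟨le_refl a, hab.le⟩ t ht)
    calc G i t = L i (ξ t) := (hL i _).symm
      _ = L i (ξ a + ∫ σ in a..t, v σ) := by rw [← hvEq t ht]
      _ = L i (ξ a) + L i (∫ σ in a..t, v σ) := map_add _ _ _
      _ = G i a + ∫ σ in a..t, wi i σ := by
          rw [hL i (ξ a), ← (L i).intervalIntegral_comp_comm h2]
  have hGdiff : ∀ p ∈ Set.Icc a b, ∀ q ∈ Set.Icc a b, ∀ i,
      G i q = G i p + ∫ σ in p..q, wi i σ := by
    intro p hp q hq i
    have hadd : (∫ σ in a..p, wi i σ) + ∫ σ in p..q, wi i σ = ∫ σ in a..q, wi i σ :=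
      intervalIntegral.integral_add_adjacent_intervals
        ((hwiI i).mono_set (hsubI a ⟨le_refl a, hab.le⟩ p hp))
        ((hwiI i).mono_set (hsubI p hp q hq))
    rw [hGt q hq i, hGt p hp i, ← hadd]
    ring
  -- continuity
  have hvInt : IntegrableOn v (Set.uIcc a b) volume := by
    rw [Set.uIcc_of_le hab.le, integrableOn_Icc_iff_integrableOn_Ioc]
    exact hvI.1
  have hξc : ContinuousOn ξ (Set.Icc a b) := by
    have h1 : ContinuousOn (fun t => ξ a + ∫ σ in a..t, v σ) (Set.Icc a b) := by
      apply ContinuousOn.add continuousOn_const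
      have := intervalIntegral.continuousOn_primitive_interval hvInt
      rwa [Set.uIcc_of_le hab.le] at this
    exact h1.congr hvEq
  have hpolyc : Continuous (polyV hm c) := by
    apply continuous_finset_sup' _ hne'
    intro i
    exact continuous_finset_sum _ fun k _ => continuous_const.mul (continuous_apply k)
  have hfc : ContinuousOn (fun τ => polyV hm c (ξ τ)) (Set.Icc a b) :=
    hpolyc.comp_continuousOn hξc
  -- max of the wi, and dominating function
  set W : ℝ → ℝ := fun τ => Finset.univ.sup' hne' (fun i => wi i τ) with hWdef
  have hWI : IntervalIntegrable W volume a b :=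
    intervalIntegrable_finset_sup' _ hne' hwiI
  set g₀ : ℝ → ℝ := fun τ => |W τ| + 1 with hg₀def
  have hg₀I : IntervalIntegrable g₀ volume a b := hWI.abs.add intervalIntegrable_const
  set gb : ℝ → ℝ := (Set.Ioc a b).indicator g₀ with hgbdef
  have hgbInt : Integrable gb volume :=
    (integrable_indicator_iff measurableSet_Ioc).2 hg₀I.1
  have hgb0 : ∀ τ, 0 ≤ gb τ :=
    fun τ => Set.indicator_nonneg (fun σ _ => by positivity) τ
  set wI : Fin m → ℝ → ℝ := fun i => (Set.Ioc a b).indicator (wi i) with hwIdef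
  have hwIint : ∀ i, Integrable (wI i) volume :=
    fun i => (integrable_indicator_iff measurableSet_Ioc).2 (hwiI i).1
  -- Claim 1
  have claim1 : ∀ p ∈ Set.Icc a b, ∀ q ∈ Set.Icc a b, p ≤ q →
      polyV hm c (ξ q) - polyV hm c (ξ p) ≤ ∫ σ in p..q, W σ := by
    intro p hp q hq hpq
    obtain ⟨i, _, hieq⟩ := Finset.exists_mem_eq_sup' hne' (fun i => G i q)
    have h1 : polyV hm c (ξ q) = G i q := by rw [hfG]; exact hieq
    have h2 : (∫ σ in p..q, wi i σ) ≤ ∫ σ in p..q, W σ := by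
      apply intervalIntegral.integral_mono_on hpq
        ((hwiI i).mono_set (hsubI p hp q hq)) (hWI.mono_set (hsubI p hp q hq))
      intro x _
      rw [hWdef]
      exact Finset.le_sup' (fun j => wi j x) (Finset.mem_univ i)
    have h3 := hGle i p
    have h4 := hGdiff p hp q hq i
    linarith
  -- the good-point predicate
  set P : ℝ → Prop := fun u => v u ∈ F (ξ u) ∧ ∀ i, ∀ ε > (0:ℝ),
    ∀ᶠ x in nhdsWithin u (Set.Ioi u),
      |(∫ σ in u..x, wI i σ) - (x - u) * wI i u| ≤ ε * (x - u) with hPdef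
  have hGood : ∀ᵐ u ∂(volume : Measure ℝ), u ∈ Set.Ioo a b → P u := by
    have h2 : ∀ᵐ u ∂(volume : Measure ℝ), ∀ i, ∀ ε > (0:ℝ),
        ∀ᶠ x in nhdsWithin u (Set.Ioi u),
          |(∫ σ in u..x, wI i σ) - (x - u) * wI i u| ≤ ε * (x - u) :=
      ae_all_iff.2 (fun i => ae_onesided _ (hwIint i))
    filter_upwards [hvF, h2] with u hu1 hu2 hu
    exact ⟨hu1 (Set.Ioo_subset_Icc_self hu), hu2⟩
  -- Claim 2: local strict decrease at good points
  have claim2 : ∀ u ∈ Set.Ioo a b, P u →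
      ∀ᶠ x in nhdsWithin u (Set.Ioi u), x ∈ Set.Icc a b →
        polyV hm c (ξ x) < polyV hm c (ξ u) := by
    intro u hu hP
    have huIcc : u ∈ Set.Icc a b := Set.Ioo_subset_Icc_self hu
    have hwIu : ∀ i, wI i u = wi i u := by
      intro i
      simp only [hwIdef]
      exact Set.indicator_of_mem (Set.mem_Ioc.2 ⟨hu.1, hu.2.le⟩) _
    have hev : ∀ i : Fin m, ∀ᶠ x in nhdsWithin u (Set.Ioi u),
        x ∈ Set.Icc a b → G i x < polyV hm c (ξ u) := by
      intro i
      have hIeq : ∀ x, u < x → x ∈ Set.Icc a b →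
          (∫ σ in u..x, wI i σ) = ∫ σ in u..x, wi i σ := by
        intro x hux hx
        apply intervalIntegral.integral_congr
        intro σ hσ
        rw [Set.uIcc_of_le hux.le] at hσ
        simp only [hwIdef]
        exact Set.indicator_of_mem (Set.mem_Ioc.2 ⟨lt_of_lt_of_le hu.1 hσ.1, le_trans hσ.2 hx.2⟩) _
      by_cases hiA : G i u = polyV hm c (ξ u)
      · -- active index
        have hneg : wi i u < 0 := by
          have h := hC2 (ξ u) (hne u huIcc) (v u) hP.1 i hiA
          rw [hwidef]
          simpa [hL] using h
        have h1 := hP.2 i (-(wi i u)/2) (by linarith)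
        filter_upwards [h1, eventually_mem_nhdsWithin] with x hx1 (hx2 : x ∈ Set.Ioi u) hx3
        have hux : u < x := hx2
        rw [hIeq x hux hx3, hwIu i] at hx1
        have hint : (∫ σ in u..x, wi i σ) ≤ (wi i u / 2) * (x - u) := by
          have h5 := (abs_le.1 hx1).2
          nlinarith
        have hGx := hGdiff u huIcc x hx3 i
        have hlt2 : (wi i u / 2) * (x - u) < 0 :=
          mul_neg_of_neg_of_pos (by linarith) (by linarith)
        calc G i x = G i u + ∫ σ in u..x, wi i σ := hGx
          _ ≤ G i u + (wi i u / 2) * (x - u) := by linarith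
          _ < G i u := by linarith
          _ = polyV hm c (ξ u) := hiA
      · -- inactive index
        have hlt : G i u < polyV hm c (ξ u) := lt_of_le_of_ne (hGle i u) hiA
        have h1 := hP.2 i 1 one_pos
        have h2 : ∀ᶠ x in nhdsWithin u (Set.Ioi u),
            (x - u) * (|wi i u| + 1) < polyV hm c (ξ u) - G i u := by
          have ht : Filter.Tendsto (fun x : ℝ => (x - u) * (|wi i u| + 1))
              (nhdsWithin u (Set.Ioi u)) (nhds 0) := by
            have h7 : Filter.Tendsto (fun x : ℝ => (x - u) * (|wi i u| + 1)) (nhds u)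
                (nhds ((u - u) * (|wi i u| + 1))) :=
              (tendsto_id.sub tendsto_const_nhds).mul tendsto_const_nhds
            simpa using h7.mono_left nhdsWithin_le_nhds
          exact ht.eventually_lt_const (by linarith)
        filter_upwards [h1, h2, eventually_mem_nhdsWithin] with x hx1 hx2 (hx3 : x ∈ Set.Ioi u) hx4
        have hux : u < x := hx3
        rw [hIeq x hux hx4, hwIu i] at hx1
        have hint : (∫ σ in u..x, wi i σ) ≤ (x - u) * (|wi i u| + 1) := by
          have h5 := (abs_le.1 hx1).2
          have h6 : (x - u) * wi i u ≤ (x - u) * |wi i u| :=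
            mul_le_mul_of_nonneg_left (le_abs_self _) (by linarith)
          nlinarith
        have hGx := hGdiff u huIcc x hx4 i
        calc G i x = G i u + ∫ σ in u..x, wi i σ := hGx
          _ ≤ G i u + (x - u) * (|wi i u| + 1) := by linarith
          _ < G i u + (polyV hm c (ξ u) - G i u) := by linarith
          _ = polyV hm c (ξ u) := by ring
    have hall := Filter.eventually_all.2 hev
    filter_upwards [hall] with x hx hxIcc
    rw [hfG x]
    exact (Finset.sup'_lt_iff hne').2 (fun i _ => hx i hxIcc)
  -- measure of the bad set is zero
  have hB0 : volume {u : ℝ | ¬ (u ∈ Set.Ioo a b → P u)} = 0 :=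
    (MeasureTheory.ae_iff).1 hGood
  -- Claim 3: global non-strict decrease
  have claim3 : ∀ p ∈ Set.Icc a b, ∀ q ∈ Set.Icc a b, p ≤ q →
      polyV hm c (ξ q) ≤ polyV hm c (ξ p) := by
    intro p hp q hq hpq
    have key : ∀ ε > (0:ℝ), polyV hm c (ξ q) - polyV hm c (ξ p) ≤ ε := by
      intro ε hε
      have hfin : ∫⁻ τ, ENNReal.ofReal (gb τ) ∂(volume : Measure ℝ) ≠ ⊤ :=
        (lintegral_ofReal_ne_top_iff_integrable hgbInt.aestronglyMeasurable
          (Filter.Eventually.of_forall hgb0)).2 hgbInt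
      obtain ⟨δ, hδ0, hδ⟩ := exists_pos_setLIntegral_lt_of_measure_lt hfin
        (ε := ENNReal.ofReal ε) (by simp [hε, hε.ne'])
      set B : Set ℝ := {u : ℝ | ¬ (u ∈ Set.Ioo a b → P u)} ∪ {a} with hBdef
      have hBμ : volume B = 0 := by
        apply le_antisymm _ zero_le
        refine le_trans (measure_union_le _ _) ?_
        rw [hB0, measure_singleton]
        simp
      obtain ⟨U, hBU, hUopen, hUμ⟩ := B.exists_isOpen_lt_of_lt δ (by rw [hBμ]; exact hδ0)
      set ψ : ℝ → ℝ := U.indicator gb with hψdef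
      have hψint : Integrable ψ volume := hgbInt.indicator hUopen.measurableSet
      have hψ0 : ∀ τ, 0 ≤ ψ τ := fun τ => Set.indicator_nonneg (fun σ _ => hgb0 σ) τ
      have hψbound : (∫ σ in p..q, ψ σ) ≤ ε := by
        rw [intervalIntegral.integral_of_le hpq]
        have e1 : (∫ σ in Set.Ioc p q, ψ σ ∂volume) = ∫ σ in Set.Ioc p q ∩ U, gb σ ∂volume := by
          rw [hψdef, MeasureTheory.setIntegral_indicator hUopen.measurableSet]
        have e2 : (∫ σ in Set.Ioc p q ∩ U, gb σ ∂volume)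
            = (∫⁻ σ in Set.Ioc p q ∩ U, ENNReal.ofReal (gb σ) ∂volume).toReal := by
          rw [MeasureTheory.integral_eq_lintegral_of_nonneg_ae
            (Filter.Eventually.of_forall (fun σ => hgb0 σ))
            hgbInt.aestronglyMeasurable.restrict]
        have e3 : (∫⁻ σ in Set.Ioc p q ∩ U, ENNReal.ofReal (gb σ) ∂volume)
            ≤ ∫⁻ σ in U, ENNReal.ofReal (gb σ) ∂volume :=
          lintegral_mono_set Set.inter_subset_right
        have e4 := hδ U hUμ
        rw [e1, e2]
        exact ENNReal.toReal_le_of_le_ofReal hε.le (le_trans e3 e4.le)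
      set h : ℝ → ℝ := fun τ => polyV hm c (ξ τ) - ∫ σ in p..τ, ψ σ with hhdef
      have hhc : ContinuousOn h (Set.Icc p q) := by
        apply ContinuousOn.sub
        · exact hfc.mono (Set.Icc_subset_Icc hp.1 hq.2)
        · have := intervalIntegral.continuousOn_primitive_interval
            (f := ψ) (a := p) (b := q) (μ := volume) (hψint.integrableOn)
          rwa [Set.uIcc_of_le hpq] at this
      have hloc : ∀ u ∈ Set.Ico p q, ∀ᶠ x in nhdsWithin u (Set.Ioi u), x ≤ q → h x ≤ h u := by
        intro u hu
        have huab : u ∈ Set.Icc a b := ⟨le_trans hp.1 hu.1, le_trans hu.2.le hq.2⟩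
        have hadd : ∀ x, (∫ σ in p..x, ψ σ) = (∫ σ in p..u, ψ σ) + ∫ σ in u..x, ψ σ := by
          intro x
          rw [intervalIntegral.integral_add_adjacent_intervals
            (hψint.intervalIntegrable) (hψint.intervalIntegrable)]
        by_cases hUu : u ∈ U
        · -- covered by the open set
          obtain ⟨η, hη0, hball⟩ := Metric.isOpen_iff.1 hUopen u hUu
          have hIoo : Set.Ioo u (u + η) ∈ nhdsWithin u (Set.Ioi u) :=
            Ioo_mem_nhdsGT_of_mem ⟨le_refl u, by linarith⟩
          filter_upwards [hIoo] with x hx hxq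
          have hux : u < x := hx.1
          have hxab : x ∈ Set.Icc a b := ⟨le_trans huab.1 hux.le, le_trans hxq hq.2⟩
          have hIccU : Set.Icc u x ⊆ U := by
            intro σ hσ
            apply hball
            rw [mem_ball, Real.dist_eq, abs_lt]
            constructor
            · linarith [hσ.1]
            · linarith [hσ.2, hx.2]
          have hW := claim1 u huab x hxab hux.le
          have hψeq : (∫ σ in u..x, ψ σ) = ∫ σ in u..x, gb σ := by
            apply intervalIntegral.integral_congr
            intro σ hσ
            rw [Set.uIcc_of_le hux.le] at hσ
            simp only [hψdef]
            exact Set.indicator_of_mem (hIccU hσ) _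
          have hWgb : (∫ σ in u..x, W σ) ≤ ∫ σ in u..x, gb σ := by
            apply intervalIntegral.integral_mono_ae_restrict hux.le
              (hWI.mono_set (hsubI u huab x hxab)) (hgbInt.intervalIntegrable)
            rw [Filter.EventuallyLE, MeasureTheory.ae_iff]
            have hsub2 : {σ : ℝ | ¬ W σ ≤ gb σ} ∩ Set.Icc u x ⊆ {a} := by
              rintro σ ⟨hσ1, hσ2⟩
              by_contra hσa
              apply hσ1
              have hσIoc : σ ∈ Set.Ioc a b :=
                ⟨lt_of_le_of_ne (le_trans huab.1 hσ2.1) (Ne.symm hσa),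
                  le_trans hσ2.2 (le_trans hxq hq.2)⟩
              show W σ ≤ gb σ
              rw [hgbdef]
              rw [Set.indicator_of_mem hσIoc]
              calc W σ ≤ |W σ| := le_abs_self _
                _ ≤ |W σ| + 1 := by linarith
            rw [MeasureTheory.Measure.restrict_apply' measurableSet_Icc]
            exact measure_mono_null hsub2 (measure_singleton a)
          simp only [hhdef]
          rw [hadd x]
          linarith
        · -- good point
          have huB : u ∉ B := fun hc => hUu (hBU hc)
          have hua : u ≠ a := fun he => huB (Set.mem_union_right _ (by rw [he]; rfl))
          have huIoo : u ∈ Set.Ioo a b :=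
            ⟨lt_of_le_of_ne huab.1 (Ne.symm hua), lt_of_lt_of_le hu.2 hq.2⟩
          have hPu : P u := by
            by_contra hPu
            exact huB (Set.mem_union_left _
              (by simp only [Set.mem_setOf_eq]; exact fun himp => hPu (himp huIoo)))
          have h2 := claim2 u huIoo hPu
          filter_upwards [h2, eventually_mem_nhdsWithin] with x hx (hx2 : x ∈ Set.Ioi u) hxq
          have hux : u < x := hx2
          have hxab : x ∈ Set.Icc a b := ⟨le_trans huab.1 hux.le, le_trans hxq hq.2⟩
          have hlt := hx hxab
          have hψpos : 0 ≤ ∫ σ in u..x, ψ σ :=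
            intervalIntegral.integral_nonneg hux.le (fun σ _ => hψ0 σ)
          simp only [hhdef]
          rw [hadd x]
          linarith
      have hfinal := local_le hpq hhc hloc
      simp only [hhdef] at hfinal
      rw [intervalIntegral.integral_same] at hfinal
      linarith
    by_contra hcon
    push_neg at hcon
    have := key ((polyV hm c (ξ q) - polyV hm c (ξ p))/2) (by linarith)
    linarith
  -- conclusion
  intro x₁ hx₁ x₂ hx₂ h12
  simp only
  have hx12 : Set.Ioo x₁ x₂ ⊆ Set.Ioo a b := Set.Ioo_subset_Ioo hx₁.1 hx₂.2
  have hex : ∃ u₀ ∈ Set.Ioo x₁ x₂, P u₀ := by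
    by_contra hcon
    push_neg at hcon
    have hsub2 : Set.Ioo x₁ x₂ ⊆ {u : ℝ | ¬ (u ∈ Set.Ioo a b → P u)} := by
      intro u hu
      simp only [Set.mem_setOf_eq]
      exact fun himp => hcon u hu (himp (hx12 hu))
    have h0 := measure_mono_null hsub2 hB0
    rw [Real.volume_Ioo, ENNReal.ofReal_eq_zero] at h0
    linarith
  obtain ⟨u₀, hu₀, hPu₀⟩ := hex
  have hu₀Icc : u₀ ∈ Set.Icc a b := Set.Ioo_subset_Icc_self (hx12 hu₀)
  have h2 := claim2 u₀ (hx12 hu₀) hPu₀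
  have h3 : ∀ᶠ x in nhdsWithin u₀ (Set.Ioi u₀), x < x₂ :=
    eventually_nhdsWithin_of_eventually_nhds (eventually_lt_nhds hu₀.2)
  obtain ⟨x₃, hx₃1, hx₃2, hx₃3⟩ := (h2.and (h3.and eventually_mem_nhdsWithin)).exists
  have hx₃Ioi : u₀ < x₃ := hx₃3
  have hx₃Icc : x₃ ∈ Set.Icc a b := ⟨le_trans hu₀Icc.1 hx₃Ioi.le, le_trans hx₃2.le hx₂.2⟩
  calc polyV hm c (ξ x₂) ≤ polyV hm c (ξ x₃) := claim3 x₃ hx₃Icc x₂ hx₂ hx₃2.le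
    _ < polyV hm c (ξ u₀) := hx₃1 hx₃Icc
    _ ≤ polyV hm c (ξ x₁) := claim3 x₁ hx₁ u₀ hu₀Icc hu₀.1.le
end
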